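/- Let G be a group and let N be a normal subgroup of G such that the quotient G/N is finite. If N is rationally perfect, then G is rationally perfect. -/

import Mathlib

/-- A group `G` is *rationally perfect* if `H¹(G; V) = 0` for every
finite-dimensional rational representation `V` of `G`. -/
def RationallyPerfect (G : Type) [Group G] : Prop :=
  ∀ (V : Type) [AddCommGroup V] [Module ℚ V] [FiniteDimensional ℚ V]
    (ρ : Representation ℚ G V),
      Subsingleton (groupCohomology.H1 (Rep.of ρ))

/-- If `N` is a normal subgroup of `G` with finite quotient `G/N` and `N` is
rationally perfect, then `G` is rationally perfect. -/
theorem statement_7 (G : Type) [Group G] (N : Subgroup G) [N.Normal]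
    [Finite (G ⧸ N)] (hN : RationallyPerfect N) : RationallyPerfect G := by
  classical
  intro V _ _ _ ρ
  have memB : ∀ {H : Type} [Group H] (σ : Representation ℚ H V) (f : H → V),
      f ∈ groupCohomology.coboundaries₁ (Rep.of σ) ↔ ∃ v : V, ∀ g, σ g v - v = f g := by
    intro H _ σ f
    constructor
    · rintro ⟨y, hy⟩
      exact ⟨y, fun g => congrFun hy g⟩
    · rintro ⟨v, hv⟩
      exact ⟨v, funext hv⟩
  suffices hall : ∀ x : groupCohomology.H1 (Rep.of ρ), x = 0 from
    ⟨fun a b => (hall a).trans (hall b).symm⟩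
  intro x
  induction x using groupCohomology.H1_induction_on with | h F => ?_
  rw [groupCohomology.H1π_eq_zero_iff, memB]
  obtain ⟨f, hfc⟩ := F
  set f₀ : G → V := (fun g => f g : G → V) with hf₀
  have hf : ∀ g h : G, f₀ (g * h) = ρ g (f₀ h) + f₀ g :=
    fun g h => (groupCohomology.mem_cocycles₁_iff (A := Rep.of ρ) f).1 hfc g h
  -- restrict to N
  set ρN : Representation ℚ N V := ρ.comp N.subtype with hρN
  have hsub := hN V ρN
  have hfN : (fun n : N => f n) ∈ groupCohomology.cocycles₁ (Rep.of ρN) := by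
    rw [groupCohomology.mem_cocycles₁_iff]
    exact fun n m => hf n m
  have hmem : (fun n : N => f n) ∈
      groupCohomology.coboundaries₁ (Rep.of ρN) :=
    (groupCohomology.H1π_eq_zero_iff (⟨_, hfN⟩ : groupCohomology.cocycles₁ (Rep.of ρN))).1
      (Subsingleton.elim _ _)
  rw [memB] at hmem
  obtain ⟨v, hv⟩ := hmem
  set v₀ : V := (v : V) with hv₀
  have hv' : ∀ n : N, ρ (n : G) v₀ - v₀ = f₀ (n : G) := fun n => hv n
  -- the modified cocycle
  set f' : G → V := fun g => f₀ g - (ρ g v₀ - v₀) with hf'def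
  have hf'cocycle : ∀ g h : G, f' (g * h) = ρ g (f' h) + f' g := by
    intro g h
    simp only [hf'def, hf g h, map_mul, map_sub, Module.End.mul_apply]
    abel
  have hconst : ∀ (g g' : G), (g : G ⧸ N) = (g' : G ⧸ N) → f' g = f' g' := by
    intro g g' hgg'
    rw [QuotientGroup.eq] at hgg'
    have hgg'' : g' = g * (⟨g⁻¹ * g', hgg'⟩ : N) := by simp
    have hzero : f' ((⟨g⁻¹ * g', hgg'⟩ : N) : G) = 0 := by
      have := hv' ⟨g⁻¹ * g', hgg'⟩
      simp [hf'def, ← this]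
    rw [hgg'', hf'cocycle, hzero, map_zero, zero_add]
  have : Fintype (G ⧸ N) := Fintype.ofFinite _
  set S : V := ∑ q : G ⧸ N, f' q.out with hS
  have hcard : (Fintype.card (G ⧸ N) : ℚ) ≠ 0 := by
    exact_mod_cast Fintype.card_ne_zero
  have key : ∀ g : G, (Fintype.card (G ⧸ N) : ℚ) • f' g = S - ρ g S := by
    intro g
    have h1 : S = ∑ q : G ⧸ N, f' ((g • q).out) :=
      (Fintype.sum_equiv (MulAction.toPerm g) _ _ fun q => rfl).symm
    have h2 : ∀ q : G ⧸ N, f' ((g • q).out) = ρ g (f' q.out) + f' g := by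
      intro q
      have hcos : ((g • q).out : G ⧸ N) = ((g * q.out : G) : G ⧸ N) := by
        rw [QuotientGroup.out_eq', QuotientGroup.mk_mul, QuotientGroup.out_eq']
        rfl
      rw [hconst _ _ hcos]
      exact hf'cocycle g q.out
    have h3 : S = ρ g S + (Fintype.card (G ⧸ N) : ℚ) • f' g := by
      calc S = ∑ q : G ⧸ N, (ρ g (f' q.out) + f' g) := by
              rw [h1]; exact Finset.sum_congr rfl fun q _ => h2 q
        _ = ρ g S + (Fintype.card (G ⧸ N) : ℚ) • f' g := by
              rw [Finset.sum_add_distrib, ← map_sum, Finset.sum_const,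
                Finset.card_univ, hS, Nat.cast_smul_eq_nsmul]
    rw [eq_sub_iff_add_eq, add_comm, ← h3]
  -- conclude
  set w : V := (Fintype.card (G ⧸ N) : ℚ)⁻¹ • (-S) with hw
  have hw' : ∀ g : G, f' g = ρ g w - w := by
    intro g
    have hg := key g
    rw [hw, map_smul, map_neg, smul_neg, smul_neg, sub_neg_eq_add, neg_add_eq_sub,
      ← smul_sub, ← hg, inv_smul_smul₀ hcard]
  refine ⟨(w + v₀ : V), fun g => ?_⟩
  show ρ g (w + v₀) - (w + v₀) = f₀ g
  have h4 : f₀ g = ρ g w - w + (ρ g v₀ - v₀) := by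
    rw [← hw' g]; simp [hf'def]
  rw [map_add, h4]
  abel
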